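/- (Theorem 1, first part: ∂(∂y/∂x)_{(i,j)}/∂H_l = (P_l^j S_l^i)ᵀ.) Let x be a generic input point of the ReLU MLP with weights (H_1, …, H_L), fix a hidden layer index l with 2 ≤ l ≤ L−1 and indices i, j, and let F be the real-valued function on n_l × n_{l-1} real matrices sending H to the (i, j) entry of the Jacobian at x of the ReLU MLP obtained by replacing the l-th weight matrix by H (other weights fixed). Then F is Fréchet differentiable at H_l, its derivative is the linear map K ↦ S_l^i ⬝ᵥ (K *ᵥ P_l^j), and its partial derivative with respect to the matrix entry (H_l)_{ab} equals (S_l^i)_a · (P_l^j)_b; equivalently, the gradient matrix of F at H_l is the transpose of the outer product P_l^j S_l^i. -/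

import Mathlib

noncomputable section

/-- Componentwise ReLU. -/
def relu {m : ℕ} (v : Fin m → ℝ) : Fin m → ℝ := fun i => max (v i) 0

/-- Pre-activations of the ReLU MLP: `preact n H x l` is the paper's `a_{l+1}`,
i.e. `a_1 = H_1 x` is `preact n H x 0`, and `a_{l+1} = H_{l+1} g(a_l)`. -/
def preact (n : ℕ → ℕ) (H : (l : ℕ) → Matrix (Fin (n (l + 1))) (Fin (n l)) ℝ)
    (x : Fin (n 0) → ℝ) : (l : ℕ) → Fin (n (l + 1)) → ℝ
  | 0 => (H 0).mulVec x
  | l + 1 => (H (l + 1)).mulVec (relu (preact n H x l))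

/-- Activation-pattern matrix: `Gmat n H x l` is the paper's `G_{l+2}`, the diagonal
matrix recording the sign pattern of the pre-activation `preact n H x l`. -/
def Gmat (n : ℕ → ℕ) (H : (l : ℕ) → Matrix (Fin (n (l + 1))) (Fin (n l)) ℝ)
    (x : Fin (n 0) → ℝ) (l : ℕ) : Matrix (Fin (n (l + 1))) (Fin (n (l + 1))) ℝ :=
  Matrix.diagonal fun i => if 0 < preact n H x l i then (1 : ℝ) else 0

/-- The alternating matrix product `jacProd n H x l = H_{l+1} G_{l+1} H_l ⋯ G_2 H_1`. -/
def jacProd (n : ℕ → ℕ) (H : (l : ℕ) → Matrix (Fin (n (l + 1))) (Fin (n l)) ℝ)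
    (x : Fin (n 0) → ℝ) : (l : ℕ) → Matrix (Fin (n (l + 1))) (Fin (n 0)) ℝ
  | 0 => H 0
  | l + 1 => H (l + 1) * Gmat n H x l * jacProd n H x l

end

noncomputable section

/-- The tail matrix product `H_L G_L H_{L-1} ⋯ H_{l+1} G_{l+1}` of the paper, for a
network with `L = s + c + 3` layers and `l = s + 2`:
`tailProd n H x s c = (H (s+c+2) * Gmat (s+c+1)) * ⋯ * (H (s+2) * Gmat (s+1))`. -/
def tailProd (n : ℕ → ℕ) (H : (l : ℕ) → Matrix (Fin (n (l + 1))) (Fin (n l)) ℝ)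
    (x : Fin (n 0) → ℝ) (s : ℕ) :
    (c : ℕ) → Matrix (Fin (n (s + c + 3))) (Fin (n (s + 2))) ℝ
  | 0 => H (s + 2) * Gmat n H x (s + 1)
  | c + 1 => H (s + c + 3) * Gmat n H x (s + c + 2) * tailProd n H x s c

end

open Matrix

attribute [local instance] Matrix.normedAddCommGroup Matrix.normedSpace

/-- The linear map `K ↦ S ⬝ᵥ (K *ᵥ P)` on matrices, as a continuous linear map. -/
noncomputable def bilinEntryDeriv {a b : ℕ} (S : Fin a → ℝ) (P : Fin b → ℝ) :
    Matrix (Fin a) (Fin b) ℝ →L[ℝ] ℝ :=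
  LinearMap.toContinuousLinearMap
    { toFun := fun K => S ⬝ᵥ K.mulVec P
      map_add' := by
        intro K₁ K₂
        simp [Matrix.add_mulVec, dotProduct_add]
      map_smul' := by
        intro r K
        simp [Matrix.smul_mulVec, dotProduct_smul] }

lemma bilinEntryDeriv_apply {a b : ℕ} (S : Fin a → ℝ) (P : Fin b → ℝ)
    (K : Matrix (Fin a) (Fin b) ℝ) : bilinEntryDeriv S P K = S ⬝ᵥ K.mulVec P := rfl

/-- matrix-vector multiplication as a continuous linear map -/
noncomputable def mvClm {a b : ℕ} (M : Matrix (Fin a) (Fin b) ℝ) : (Fin b → ℝ) →L[ℝ] (Fin a → ℝ) :=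
  LinearMap.toContinuousLinearMap M.mulVecLin

@[simp] lemma mvClm_apply {a b : ℕ} (M : Matrix (Fin a) (Fin b) ℝ) (v : Fin b → ℝ) :
    mvClm M v = M.mulVec v := rfl

lemma relu_hasFDerivAt {m : ℕ} (v : Fin m → ℝ) (hv : ∀ i, v i ≠ 0) :
    HasFDerivAt relu (mvClm (Matrix.diagonal fun i => if 0 < v i then (1:ℝ) else 0)) v := by
  apply (mvClm (Matrix.diagonal fun i => if 0 < v i then (1:ℝ) else 0)).hasFDerivAt.congr_of_eventuallyEq
  have h : ∀ᶠ w in nhds v, ∀ i : Fin m, (0 < w i ↔ 0 < v i) := by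
    rw [Filter.eventually_all]
    intro i
    rcases (hv i).lt_or_gt with h | h
    · have : ∀ᶠ w in nhds v, w i < 0 :=
        (continuous_apply i).continuousAt.eventually_lt continuousAt_const h
      exact this.mono fun w hw => by constructor <;> intro hh <;> [exact absurd hh (by linarith); exact absurd hh (by linarith)]
    · have : ∀ᶠ w in nhds v, 0 < w i :=
        continuousAt_const.eventually_lt (continuous_apply i).continuousAt h
      exact this.mono fun w hw => by constructor <;> intro _ <;> [exact h; exact hw]
  refine h.mono fun w hw => ?_
  funext i
  simp only [relu, mvClm_apply, Matrix.mulVec_diagonal]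
  by_cases hi : 0 < v i
  · rw [if_pos hi]
    have : 0 < w i := (hw i).2 hi
    simp [max_eq_left this.le]
  · rw [if_neg hi]
    have : ¬ 0 < w i := fun hh => hi ((hw i).1 hh)
    simp [max_eq_right (le_of_not_gt this)]

lemma preact_hasFDerivAt (n : ℕ → ℕ) (H : (l : ℕ) → Matrix (Fin (n (l + 1))) (Fin (n l)) ℝ)
    (x : Fin (n 0) → ℝ) (l : ℕ) (h : ∀ l' < l, ∀ i, preact n H x l' i ≠ 0) :
    HasFDerivAt (fun u => preact n H u l) (mvClm (jacProd n H x l)) x := by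
  induction l with
  | zero => exact (mvClm (H 0)).hasFDerivAt
  | succ l ih =>
    have hih := ih (fun l' hl' => h l' (hl'.trans (Nat.lt_succ_self l)))
    have hrelu := relu_hasFDerivAt (preact n H x l) (h l (Nat.lt_succ_self l))
    have hcomp := ((mvClm (H (l+1))).hasFDerivAt.comp _ (hrelu.comp x hih))
    have heq : (mvClm (H (l + 1))).comp
        ((mvClm (Matrix.diagonal fun i => if 0 < preact n H x l i then (1:ℝ) else 0)).comp
          (mvClm (jacProd n H x l))) = mvClm (jacProd n H x (l+1)) := by
      ext v a
      show (H (l+1)).mulVec ((Gmat n H x l).mulVec ((jacProd n H x l).mulVec v)) a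
        = (jacProd n H x (l+1)).mulVec v a
      rw [show jacProd n H x (l+1) = H (l + 1) * Gmat n H x l * jacProd n H x l from rfl]
      simp [Matrix.mulVec_mulVec, Matrix.mul_assoc]
    rw [heq] at hcomp
    exact hcomp

section Upd
variable (n : ℕ → ℕ) (H : (l : ℕ) → Matrix (Fin (n (l + 1))) (Fin (n l)) ℝ)
    (x : Fin (n 0) → ℝ) (s : ℕ) (K : Matrix (Fin (n (s + 2))) (Fin (n (s + 1))) ℝ)

lemma preact_update_low : ∀ l ≤ s, preact n (Function.update H (s+1) K) x l = preact n H x l := by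
  intro l hl
  induction l with
  | zero =>
    show (Function.update H (s+1) K 0).mulVec x = (H 0).mulVec x
    rw [Function.update_of_ne (by omega)]
  | succ l ih =>
    show (Function.update H (s+1) K (l+1)).mulVec (relu (preact n (Function.update H (s+1) K) x l))
      = (H (l+1)).mulVec (relu (preact n H x l))
    rw [Function.update_of_ne (by omega), ih (by omega)]

lemma gmat_update_low : ∀ l ≤ s, Gmat n (Function.update H (s+1) K) x l = Gmat n H x l := by
  intro l hl
  unfold Gmat
  rw [preact_update_low n H x s K l hl]

lemma jacProd_update_low : ∀ l ≤ s, jacProd n (Function.update H (s+1) K) x l = jacProd n H x l := by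
  intro l hl
  induction l with
  | zero => show Function.update H (s+1) K 0 = H 0; rw [Function.update_of_ne (by omega)]
  | succ l ih =>
    show Function.update H (s+1) K (l+1) * Gmat n (Function.update H (s+1) K) x l *
        jacProd n (Function.update H (s+1) K) x l = _
    rw [Function.update_of_ne (by omega), ih (by omega), gmat_update_low n H x s K l (by omega)]
    rfl

lemma preact_update_continuous (l : ℕ) :
    Continuous fun K : Matrix (Fin (n (s + 2))) (Fin (n (s + 1))) ℝ =>
      preact n (Function.update H (s+1) K) x l := by
  induction l with
  | zero =>
    show Continuous fun K => (Function.update H (s+1) K 0).mulVec x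
    exact Continuous.matrix_mulVec (by
      by_cases h0 : 0 = s + 1
      · exact absurd h0 (by omega)
      · simp only [Function.update_of_ne h0]; exact continuous_const) continuous_const
  | succ l ih =>
    show Continuous fun K => (Function.update H (s+1) K (l+1)).mulVec
      (relu (preact n (Function.update H (s+1) K) x l))
    have hrelu : Continuous fun K => relu (preact n (Function.update H (s+1) K) x l) := by
      apply continuous_pi
      intro i
      exact ((continuous_apply i).comp ih).max continuous_const
    apply Continuous.matrix_mulVec _ hrelu
    by_cases h0 : l + 1 = s + 1
    · have hls : l = s := by omega
      subst hls
      simp only [Function.update_self]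
      exact continuous_id
    · simp only [Function.update_of_ne h0]; exact continuous_const

end Upd


lemma jacProd_eq_tailProd (n : ℕ → ℕ) (H : (l : ℕ) → Matrix (Fin (n (l + 1))) (Fin (n l)) ℝ)
    (x : Fin (n 0) → ℝ) (s : ℕ) : ∀ c,
    jacProd n H x (s + c + 2) =
      tailProd n H x s c * (H (s + 1) * Gmat n H x s * jacProd n H x s) := by
  intro c
  induction c with
  | zero =>
    show H (s + 2) * Gmat n H x (s + 1) * jacProd n H x (s + 1) = _
    rw [show jacProd n H x (s+1) = H (s + 1) * Gmat n H x s * jacProd n H x s from rfl]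
    rfl
  | succ c ih =>
    show H (s + c + 3) * Gmat n H x (s + c + 2) * jacProd n H x (s + c + 2) = _
    rw [ih]
    show _ = H (s + c + 3) * Gmat n H x (s + c + 2) * tailProd n H x s c * _
    rw [Matrix.mul_assoc (H (s + c + 3) * Gmat n H x (s + c + 2))]

lemma gmat_congr (n : ℕ → ℕ) (H H' : (l : ℕ) → Matrix (Fin (n (l + 1))) (Fin (n l)) ℝ)
    (x : Fin (n 0) → ℝ) (l : ℕ)
    (h : ∀ i, (0 < preact n H' x l i ↔ 0 < preact n H x l i)) :
    Gmat n H' x l = Gmat n H x l := by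
  unfold Gmat
  have : (fun i => if 0 < preact n H' x l i then (1:ℝ) else 0)
      = fun i => if 0 < preact n H x l i then (1:ℝ) else 0 := by
    funext i; rw [if_congr (h i) rfl rfl]
  rw [this]

lemma tailProd_update (n : ℕ → ℕ) (H : (l : ℕ) → Matrix (Fin (n (l + 1))) (Fin (n l)) ℝ)
    (x : Fin (n 0) → ℝ) (s : ℕ) (K : Matrix (Fin (n (s + 2))) (Fin (n (s + 1))) ℝ) :
    ∀ c, (∀ l, s + 1 ≤ l → l ≤ s + c + 1 →
        Gmat n (Function.update H (s+1) K) x l = Gmat n H x l) →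
      tailProd n (Function.update H (s+1) K) x s c = tailProd n H x s c := by
  intro c
  induction c with
  | zero =>
    intro hG
    show Function.update H (s+1) K (s+2) * Gmat n (Function.update H (s+1) K) x (s+1) = _
    rw [Function.update_of_ne (by omega), hG (s+1) (by omega) (by omega)]
    rfl
  | succ c ih =>
    intro hG
    show Function.update H (s+1) K (s+c+3) * Gmat n (Function.update H (s+1) K) x (s+c+2) *
        tailProd n (Function.update H (s+1) K) x s c = _
    rw [Function.update_of_ne (by omega), hG (s+c+2) (by omega) (by omega),
      ih (fun l h1 h2 => hG l h1 (by omega))]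
    rfl


/-- Theorem 1 of the paper, first part:
`∂(∂y/∂x)_{(i,j)}/∂H_l = (P_l^j S_l^i)ᵀ`.
Let `x` be a generic input of the ReLU MLP with `L = s + c + 3 ≥ 3` layers
`H 0, …, H (s+c+2)` (the paper's `H_1, …, H_L`), and consider the hidden layer with
paper index `l = s + 2` (so `2 ≤ l ≤ L - 1`), whose weight matrix is `H (s+1)`.
Let `F` send a matrix `K` to the `(i, j)` entry of the Jacobian at `x` of the MLP
obtained by replacing the `l`-th weight matrix by `K`. Then `F` is Fréchet
differentiable at `H (s+1)` with derivative the linear map `K ↦ S_l^i ⬝ᵥ (K *ᵥ P_l^j)`,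
and its partial derivative with respect to the entry `(a, b)` of the weight matrix is
`(S_l^i) a * (P_l^j) b` — i.e. the gradient matrix of `F` is `(P_l^j S_l^i)ᵀ`. -/
theorem mlp_jacobian_entry_weight_derivative (s c : ℕ) (n : ℕ → ℕ) (hn : ∀ l, 0 < n l)
    (H : (l : ℕ) → Matrix (Fin (n (l + 1))) (Fin (n l)) ℝ)
    (x : Fin (n 0) → ℝ)
    (hx : ∀ l ≤ s + c + 1, ∀ i, preact n H x l i ≠ 0)
    (i : Fin (n (s + c + 3))) (j : Fin (n 0)) :
    HasFDerivAt
        (fun K : Matrix (Fin (n (s + 2))) (Fin (n (s + 1))) ℝ =>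
          fderiv ℝ
            (fun u : Fin (n 0) → ℝ =>
              preact n (Function.update H (s + 1) K) u (s + c + 2)) x
            (Pi.single j 1) i)
        (bilinEntryDeriv (fun a => tailProd n H x s c i a)
          ((Gmat n H x s).mulVec fun b => jacProd n H x s b j))
        (H (s + 1)) ∧
      ∀ (a : Fin (n (s + 2))) (b : Fin (n (s + 1))),
        fderiv ℝ
            (fun K : Matrix (Fin (n (s + 2))) (Fin (n (s + 1))) ℝ =>
              fderiv ℝ
                (fun u : Fin (n 0) → ℝ =>
                  preact n (Function.update H (s + 1) K) u (s + c + 2)) x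
                (Pi.single j 1) i)
            (H (s + 1)) (Matrix.single a b 1) =
          tailProd n H x s c i a *
            (Gmat n H x s).mulVec (fun b' => jacProd n H x s b' j) b := by
  set S : Fin (n (s + 2)) → ℝ := fun a => tailProd n H x s c i a with hS
  set P : Fin (n (s + 1)) → ℝ := (Gmat n H x s).mulVec fun b => jacProd n H x s b j with hP
  -- the eventual sign-pattern invariance
  have hev : ∀ᶠ K in nhds (H (s + 1)), ∀ l ≤ s + c + 1, ∀ i',
      (0 < preact n (Function.update H (s+1) K) x l i' ↔ 0 < preact n H x l i') ∧
        preact n (Function.update H (s+1) K) x l i' ≠ 0 := by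
    have hbound : ∀ l ≤ s + c + 1, ∀ i', ∀ᶠ K in nhds (H (s + 1)),
        (0 < preact n (Function.update H (s+1) K) x l i' ↔ 0 < preact n H x l i') ∧
          preact n (Function.update H (s+1) K) x l i' ≠ 0 := by
      intro l hl i'
      have hcont : Continuous fun K : Matrix (Fin (n (s + 2))) (Fin (n (s + 1))) ℝ =>
          preact n (Function.update H (s+1) K) x l i' :=
        (continuous_apply i').comp (preact_update_continuous n H x s l)
      have hval : preact n (Function.update H (s+1) (H (s+1))) x l i' = preact n H x l i' := by
        rw [Function.update_eq_self]
      rcases (hx l hl i').lt_or_gt with h | h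
      · have : ∀ᶠ K in nhds (H (s + 1)),
            preact n (Function.update H (s+1) K) x l i' < 0 := by
          have ht : Filter.Tendsto
              (fun K : Matrix (Fin (n (s + 2))) (Fin (n (s + 1))) ℝ =>
                preact n (Function.update H (s+1) K) x l i')
              (nhds (H (s+1))) (nhds (preact n H x l i')) := by
            have := hcont.continuousAt (x := H (s+1))
            rwa [ContinuousAt, hval] at this
          exact ht.eventually (eventually_lt_nhds h)
        exact this.mono fun K hK => ⟨by constructor <;> intro hh <;> linarith, by linarith⟩
      · have : ∀ᶠ K in nhds (H (s + 1)),
            0 < preact n (Function.update H (s+1) K) x l i' := by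
          have ht : Filter.Tendsto
              (fun K : Matrix (Fin (n (s + 2))) (Fin (n (s + 1))) ℝ =>
                preact n (Function.update H (s+1) K) x l i')
              (nhds (H (s+1))) (nhds (preact n H x l i')) := by
            have := hcont.continuousAt (x := H (s+1))
            rwa [ContinuousAt, hval] at this
          exact ht.eventually (eventually_gt_nhds h)
        exact this.mono fun K hK => ⟨by constructor <;> intro _ <;> [exact h; exact hK], by linarith⟩
    have : ∀ᶠ K in nhds (H (s + 1)), ∀ l ∈ Finset.range (s + c + 2), ∀ i',
        (0 < preact n (Function.update H (s+1) K) x l i' ↔ 0 < preact n H x l i') ∧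
          preact n (Function.update H (s+1) K) x l i' ≠ 0 := by
      rw [Filter.eventually_all_finset]
      intro l hl
      rw [Filter.eventually_all]
      exact fun i' => hbound l (by simpa using Nat.lt_succ_iff.mp (Finset.mem_range.mp hl)) i'
    exact this.mono fun K hK l hl i' => hK l (Finset.mem_range.mpr (by omega)) i'
  -- the eventual equality with the linear map
  have hF : (fun K : Matrix (Fin (n (s + 2))) (Fin (n (s + 1))) ℝ =>
        fderiv ℝ (fun u => preact n (Function.update H (s + 1) K) u (s + c + 2)) x
          (Pi.single j 1) i) =ᶠ[nhds (H (s + 1))]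
      fun K => bilinEntryDeriv S P K := by
    refine hev.mono fun K hK => ?_
    have hne : ∀ l' < s + c + 2, ∀ i',
        preact n (Function.update H (s+1) K) x l' i' ≠ 0 :=
      fun l' hl' i' => (hK l' (by omega) i').2
    have hder := preact_hasFDerivAt n (Function.update H (s+1) K) x (s + c + 2) hne
    show fderiv ℝ (fun u => preact n (Function.update H (s + 1) K) u (s + c + 2)) x
        (Pi.single j 1) i = bilinEntryDeriv S P K
    rw [hder.fderiv]
    have hGlow : Gmat n (Function.update H (s+1) K) x s = Gmat n H x s :=
      gmat_update_low n H x s K s le_rfl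
    have hJlow : jacProd n (Function.update H (s+1) K) x s = jacProd n H x s :=
      jacProd_update_low n H x s K s le_rfl
    have hT : tailProd n (Function.update H (s+1) K) x s c = tailProd n H x s c :=
      tailProd_update n H x s K c (fun l h1 h2 =>
        gmat_congr n H (Function.update H (s+1) K) x l (fun i' => (hK l h2 i').1))
    have hjac : jacProd n (Function.update H (s+1) K) x (s + c + 2) =
        tailProd n H x s c * (K * Gmat n H x s * jacProd n H x s) := by
      rw [jacProd_eq_tailProd, hT, hGlow, hJlow, Function.update_self]
    show (jacProd n (Function.update H (s+1) K) x (s + c + 2)).mulVec (Pi.single j 1) i = _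
    rw [hjac, bilinEntryDeriv_apply, hP, Matrix.mulVec_mulVec]
    simp only [hS, Matrix.mulVec, dotProduct, Matrix.mul_apply, Pi.single_apply,
      mul_ite, mul_one, mul_zero, Finset.sum_ite_eq', Finset.mem_univ, if_true]
  have hmain : HasFDerivAt
      (fun K : Matrix (Fin (n (s + 2))) (Fin (n (s + 1))) ℝ =>
        fderiv ℝ (fun u => preact n (Function.update H (s + 1) K) u (s + c + 2)) x
          (Pi.single j 1) i)
      (bilinEntryDeriv S P) (H (s + 1)) :=
    (bilinEntryDeriv S P).hasFDerivAt.congr_of_eventuallyEq hF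
  refine ⟨hmain, fun a b => ?_⟩
  rw [hmain.fderiv, bilinEntryDeriv_apply]
  simp only [hS, hP, dotProduct, Matrix.mulVec, Matrix.single, Matrix.of_apply,
    ite_mul, one_mul, zero_mul, dotProduct]
  rw [Finset.sum_eq_single a]
  · rw [Finset.sum_eq_single b]
    · simp
    · intro b' _ hb'; simp [Ne.symm hb']
    · simp
  · intro a' _ ha'
    rw [Finset.sum_eq_zero, mul_zero]
    intro b' _
    simp [Ne.symm ha']
  · simp
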